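/- The expert-loss ℓ(y) = ⟨u, y − y₀⟩ + (β/2)⟨u, y − y₀⟩², with 0 < β ≤ 1/(8GD), ‖u‖ ≤ G, and ‖y − y₀‖ ≤ 2D for all y in the domain, is (β/4)-exp-concave on that domain, and its gradient satisfies ‖∇ℓ(y)‖² ≤ 2G². -/

import Mathlib

local notation "⟪" x ", " y "⟫" => @inner ℝ _ _ x y

/-- The expert-loss ℓ(y) = ⟨u, y − y₀⟩ + (β/2)⟨u, y − y₀⟩², with 0 < β ≤ 1/(8GD),
‖u‖ ≤ G, on the domain Y = {y : ‖y‖ ≤ D} (with ‖y₀‖ ≤ D, so ‖y − y₀‖ ≤ 2D),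
is (β/4)-exp-concave on Y, and its gradient ∇ℓ(y) = u + β⟨u, y−y₀⟩u
satisfies ‖∇ℓ(y)‖² ≤ 2G². -/
theorem expert_loss_exp_properties {d : ℕ}
    (u y₀ : EuclideanSpace ℝ (Fin d)) (β G D : ℝ)
    (hβ0 : 0 < β) (hβ : β ≤ 1 / (8 * G * D)) (hG : 0 < G) (hD : 0 < D)
    (hu : ‖u‖ ≤ G) (hy₀ : ‖y₀‖ ≤ D)
    (ℓ : EuclideanSpace ℝ (Fin d) → ℝ)
    (hℓ : ∀ y, ℓ y = ⟪u, y - y₀⟫ + β / 2 * ⟪u, y - y₀⟫ ^ 2) :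
    ConcaveOn ℝ (Metric.closedBall (0 : EuclideanSpace ℝ (Fin d)) D)
        (fun y => Real.exp (-(β / 4) * ℓ y)) ∧
      (∀ y ∈ Metric.closedBall (0 : EuclideanSpace ℝ (Fin d)) D,
        ‖u + (β * ⟪u, y - y₀⟫) • u‖ ^ 2 ≤ 2 * G ^ 2) := by
  have h8 : (0:ℝ) < 8 * G * D := by positivity
  have hβ8 : β * (8 * G * D) ≤ 1 := by
    have := (le_div_iff₀ h8).mp hβ; linarith
  -- bound on the inner product for points in the ball
  have hbound : ∀ y ∈ Metric.closedBall (0 : EuclideanSpace ℝ (Fin d)) D,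
      |⟪u, y - y₀⟫| ≤ 2 * G * D := by
    intro y hy
    rw [Metric.mem_closedBall, dist_zero_right] at hy
    have h1 : ‖y - y₀‖ ≤ 2 * D := by
      calc ‖y - y₀‖ ≤ ‖y‖ + ‖y₀‖ := norm_sub_le _ _
        _ ≤ 2 * D := by linarith
    calc |⟪u, y - y₀⟫| ≤ ‖u‖ * ‖y - y₀‖ := abs_real_inner_le_norm _ _
      _ ≤ G * (2 * D) := by
          apply mul_le_mul hu h1 (norm_nonneg _) (le_of_lt hG)
      _ = 2 * G * D := by ring
  -- the 1D function
  set g : ℝ → ℝ := fun t => Real.exp (-(β / 4) * (t + β / 2 * t ^ 2)) with hg_def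
  have hp : ∀ t : ℝ, HasDerivAt (fun t : ℝ => -(β / 4) * (t + β / 2 * t ^ 2))
      (-(β / 4) * (1 + β * t)) t := by
    intro t
    have h := (((hasDerivAt_id t).add (((hasDerivAt_pow 2 t)).const_mul (β / 2))).const_mul
      (-(β / 4)))
    exact h.congr_deriv (by push_cast; ring)
  have hg' : ∀ t : ℝ, HasDerivAt g
      (Real.exp (-(β / 4) * (t + β / 2 * t ^ 2)) * (-(β / 4) * (1 + β * t))) t := by
    intro t; exact (hp t).exp
  have hg'' : ∀ t : ℝ, HasDerivAt
      (fun t => Real.exp (-(β / 4) * (t + β / 2 * t ^ 2)) * (-(β / 4) * (1 + β * t)))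
      (Real.exp (-(β / 4) * (t + β / 2 * t ^ 2)) *
        ((β / 4) ^ 2 * (1 + β * t) ^ 2 - β ^ 2 / 4)) t := by
    intro t
    have h1 : HasDerivAt (fun t : ℝ => -(β / 4) * (1 + β * t)) (-(β / 4) * β) t := by
      have h := (((hasDerivAt_id t).const_mul β).const_add 1).const_mul (-(β / 4))
      simpa using h
    have h := ((hp t).exp).mul h1
    exact h.congr_deriv (by ring)
  have hgconc : ConcaveOn ℝ (Set.Icc (-(2 * G * D)) (2 * G * D)) g := by
    apply concaveOn_of_hasDerivWithinAt2_nonpos (convex_Icc _ _)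
      (f' := fun t => Real.exp (-(β / 4) * (t + β / 2 * t ^ 2)) * (-(β / 4) * (1 + β * t)))
      (f'' := fun t => Real.exp (-(β / 4) * (t + β / 2 * t ^ 2)) *
        ((β / 4) ^ 2 * (1 + β * t) ^ 2 - β ^ 2 / 4))
    · exact fun t _ => (hg' t).continuousAt.continuousWithinAt
    · exact fun t ht => (hg' t).hasDerivWithinAt
    · exact fun t ht => (hg'' t).hasDerivWithinAt
    · intro t ht
      rw [interior_Icc] at ht
      have ht1 : |t| ≤ 2 * G * D := by
        rw [abs_le]; exact ⟨le_of_lt ht.1, le_of_lt ht.2⟩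
      have hβt : |β * t| ≤ 1 / 4 := by
        rw [abs_mul, abs_of_pos hβ0]
        calc β * |t| ≤ β * (2 * G * D) := by
              exact mul_le_mul_of_nonneg_left ht1 (le_of_lt hβ0)
          _ ≤ 1 / 4 := by nlinarith
      apply mul_nonpos_of_nonneg_of_nonpos (le_of_lt (Real.exp_pos _))
      have h1 : -(1/4 : ℝ) ≤ β * t := by cases abs_le.mp hβt; linarith
      have h2 : β * t ≤ 1/4 := (abs_le.mp hβt).2
      have hx : (1 + β * t) ^ 2 ≤ 4 := by nlinarith
      nlinarith [mul_le_mul_of_nonneg_left hx (sq_nonneg (β / 4))]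
  constructor
  · refine ⟨convex_closedBall _ _, ?_⟩
    intro x hx y hy a b ha hb hab
    have hfx : ∀ z, Real.exp (-(β / 4) * ℓ z) = g ⟪u, z - y₀⟫ := by
      intro z; rw [hℓ z]
    simp only [hfx]
    have hb1 : b = 1 - a := by linarith
    subst hb1
    have key : ⟪u, (a • x + (1 - a) • y) - y₀⟫ =
        a * ⟪u, x - y₀⟫ + (1 - a) * ⟪u, y - y₀⟫ := by
      have h1 : (a • x + (1 - a) • y) - y₀ = a • (x - y₀) + (1 - a) • (y - y₀) := by
        module
      rw [h1, inner_add_right, real_inner_smul_right, real_inner_smul_right]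
    rw [key]
    have hmx : ⟪u, x - y₀⟫ ∈ Set.Icc (-(2 * G * D)) (2 * G * D) := by
      have := hbound x hx; rw [abs_le] at this; exact ⟨this.1, this.2⟩
    have hmy : ⟪u, y - y₀⟫ ∈ Set.Icc (-(2 * G * D)) (2 * G * D) := by
      have := hbound y hy; rw [abs_le] at this; exact ⟨this.1, this.2⟩
    exact hgconc.2 hmx hmy ha hb hab
  · intro y hy
    have ht1 : |⟪u, y - y₀⟫| ≤ 2 * G * D := hbound y hy
    set t : ℝ := ⟪u, y - y₀⟫
    have hβt : |β * t| ≤ 1 / 4 := by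
      rw [abs_mul, abs_of_pos hβ0]
      calc β * |t| ≤ β * (2 * G * D) := mul_le_mul_of_nonneg_left ht1 (le_of_lt hβ0)
        _ ≤ 1 / 4 := by nlinarith
    have h1 : -(1/4 : ℝ) ≤ β * t := by cases abs_le.mp hβt; linarith
    have h2 : β * t ≤ 1/4 := (abs_le.mp hβt).2
    have heq : u + (β * t) • u = (1 + β * t) • u := by
      rw [add_smul, one_smul]
    rw [heq, norm_smul, mul_pow, Real.norm_eq_abs, sq_abs]
    have hun : (0:ℝ) ≤ ‖u‖ := norm_nonneg _
    have hx : (1 + β * t) ^ 2 ≤ 2 := by nlinarith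
    have hu2 : ‖u‖ ^ 2 ≤ G ^ 2 := by nlinarith [mul_le_mul hu hu hun (le_of_lt hG)]
    nlinarith [mul_le_mul hx hu2 (sq_nonneg ‖u‖) (by norm_num : (0:ℝ) ≤ 2)]
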